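/- For all (a₁,a₂) ∈ ℝ², S_ρ(a₁,a₂)² = K(X₁(a₁,a₂), X₂(a₁,a₂)). -/
import Mathlib

open Real

noncomputable section

/-- `X₁` for `G₂`. -/
def X1 (a₁ a₂ : ℝ) : ℝ :=
  2 * (Real.cos (2 * π * a₁) + Real.cos (2 * π * (a₁ - 3 * a₂)) +
    Real.cos (2 * π * (2 * a₁ - 3 * a₂)))

/-- `X₂` for `G₂`. -/
def X2 (a₁ a₂ : ℝ) : ℝ :=
  2 * (Real.cos (2 * π * a₂) + Real.cos (2 * π * (a₁ - a₂)) +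
    Real.cos (2 * π * (a₁ - 2 * a₂)))

/-- The weight polynomial `K` of `G₂`. -/
def K (y₁ y₂ : ℝ) : ℝ :=
  (y₂ ^ 2 - 4 * y₁ - 12) *
    (y₁ ^ 2 - 4 * y₂ ^ 3 + 12 * y₁ * y₂ + 24 * y₁ + 36 * y₂ + 36)

/-- The lowest antisymmetric orbit function `S_ρ` of `G₂`. -/
def Srho (a₁ a₂ : ℝ) : ℝ :=
  2 * (Real.cos (2 * π * (a₁ + a₂)) - Real.cos (2 * π * (-a₁ + 4 * a₂)) -
    Real.cos (2 * π * (2 * a₁ - a₂)) + Real.cos (2 * π * (3 * a₁ - 4 * a₂)) +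
    Real.cos (2 * π * (-2 * a₁ + 5 * a₂)) - Real.cos (2 * π * (-3 * a₁ + 5 * a₂)))

set_option maxHeartbeats 2000000
set_option maxRecDepth 20000

set_option maxHeartbeats 2000000
set_option maxRecDepth 20000

lemma hSr (cu su cv sv : ℝ) (hu : su ^ 2 + cu ^ 2 = 1) (hv : sv ^ 2 + cv ^ 2 = 1) :
    ((-2)*su*sv + (8)*su*cv*sv^3 + (-8)*su*cv^3*sv + (2)*su^2*cv + (-10)*su^2*cv*sv^4 + (20)*su^2*cv^3*sv^2 + (-2)*su^2*cv^5 + (2)*su^3*sv^5 + (8)*su^3*cv*sv^3 + (-20)*su^3*cv^2*sv^3 + (-8)*su^3*cv^3*sv + (10)*su^3*cv^4*sv + (-2)*cu*sv^4 + (2)*cu*cv + (12)*cu*cv^2*sv^2 + (-2)*cu*cv^4 + (-4)*cu*su*sv + (4)*cu*su*sv^5 + (-40)*cu*su*cv^2*sv^3 + (20)*cu*su*cv^4*sv + (-6)*cu*su^2*sv^4 + (30)*cu*su^2*cv*sv^4 + (36)*cu*su^2*cv^2*sv^2 + (-60)*cu*su^2*cv^3*sv^2 + (-6)*cu*su^2*cv^4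 + (6)*cu*su^2*cv^5 + (-2)*cu^2*cv + (10)*cu^2*cv*sv^4 + (-20)*cu^2*cv^3*sv^2 + (2)*cu^2*cv^5 + (-6)*cu^2*su*sv^5 + (-24)*cu^2*su*cv*sv^3 + (60)*cu^2*su*cv^2*sv^3 + (24)*cu^2*su*cv^3*sv + (-30)*cu^2*su*cv^4*sv + (2)*cu^3*sv^4 + (-10)*cu^3*cv*sv^4 + (-12)*cu^3*cv^2*sv^2 + (20)*cu^3*cv^3*sv^2 + (2)*cu^3*cv^4 + (-2)*cu^3*cv^5) = ((-8)*cv + (40)*cv^3 + (-32)*cv^5 + (16)*su*cv*sv + (-24)*su*cv^2*sv + (-32)*su*cv^3*sv + (32)*su*cv^4*sv + (-8)*cu + (32)*cu*cv + (64)*cu*cv^2 + (-120)*cu*cv^3 + (-64)*cu*cv^4 + (96)*cu*cv^5 + (-48)*cu*su*cv^2*sv + (64)*cu*su*cv^4*sv + (16)*cu^2*cv + (-80)*cu^2*cv^3 + (64)*cu^2*cv^5 + (-8)*cu^2*su*sv + (-32)*cu^2*su*cv*sv + (96)*cu^2*su*cv^2*sv + (64)*cu^2*su*cv^3*sv + (-128)*cu^2*su*cv^4*sv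 + (8)*cu^3 + (-40)*cu^3*cv + (-64)*cu^3*cv^2 + (160)*cu^3*cv^3 + (64)*cu^3*cv^4 + (-128)*cu^3*cv^5) := by
  linear_combination ((2)*cv + (-10)*cv*sv^4 + (20)*cv^3*sv^2 + (-2)*cv^5 + (2)*su*sv^5 + (8)*su*cv*sv^3 + (-20)*su*cv^2*sv^3 + (-8)*su*cv^3*sv + (10)*su*cv^4*sv + (-6)*cu*sv^4 + (30)*cu*cv*sv^4 + (36)*cu*cv^2*sv^2 + (-60)*cu*cv^3*sv^2 + (-6)*cu*cv^4 + (6)*cu*cv^5) * hu + ((-10)*cv + (-10)*cv*sv^2 + (30)*cv^3 + (2)*su*sv + (2)*su*sv^3 + (16)*su*cv*sv + (-22)*su*cv^2*sv + (-8)*cu + (-8)*cu*sv^2 + (30)*cu*cv + (30)*cu*cv*sv^2 + (56)*cu*cv^2 + (-90)*cu*cv^3 + (4)*cu*su*sv + (4)*cu*su*sv^3 + (-44)*cu*su*cv^2*sv + (20)*cu^2*cv + (20)*cu^2*cv*sv^2 + (-60)*cu^2*cv^3 + (-8)*cu^2*su*sv + (-8)*cu^2*su*sv^3 + (-32)*cu^2*su*cv*sv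 + (88)*cu^2*su*cv^2*sv + (8)*cu^3 + (8)*cu^3*sv^2 + (-40)*cu^3*cv + (-40)*cu^3*cv*sv^2 + (-56)*cu^3*cv^2 + (120)*cu^3*cv^3) * hv

lemma hS2 (cu su cv sv : ℝ) (hu : su ^ 2 + cu ^ 2 = 1) (hv : sv ^ 2 + cv ^ 2 = 1) :
    ((-8)*cv + (40)*cv^3 + (-32)*cv^5 + (16)*su*cv*sv + (-24)*su*cv^2*sv + (-32)*su*cv^3*sv + (32)*su*cv^4*sv + (-8)*cu + (32)*cu*cv + (64)*cu*cv^2 + (-120)*cu*cv^3 + (-64)*cu*cv^4 + (96)*cu*cv^5 + (-48)*cu*su*cv^2*sv + (64)*cu*su*cv^4*sv + (16)*cu^2*cv + (-80)*cu^2*cv^3 + (64)*cu^2*cv^5 + (-8)*cu^2*su*sv + (-32)*cu^2*su*cv*sv + (96)*cu^2*su*cv^2*sv + (64)*cu^2*su*cv^3*sv + (-128)*cu^2*su*cv^4*sv + (8)*cu^3 + (-40)*cu^3*cv + (-64)*cu^3*cv^2 + (160)*cu^3*cv^3 + (64)*cu^3*cv^4 + (-128)*cu^3*cv^5) ^ 2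 = ((320)*cv^2 + (-768)*cv^3 + (-1344)*cv^4 + (3328)*cv^5 + (2048)*cv^6 + (-4608)*cv^7 + (-1024)*cv^8 + (2048)*cv^9 + (-256)*su*cv^2*sv + (384)*su*cv^3*sv + (1792)*su*cv^4*sv + (-2432)*su*cv^5*sv + (-3584)*su*cv^6*sv + (4096)*su*cv^7*sv + (2048)*su*cv^8*sv + (-2048)*su*cv^9*sv + (128)*cu*cv + (-512)*cu*cv^2 + (-3200)*cu*cv^3 + (6784)*cu*cv^4 + (13312)*cu*cv^5 + (-21632)*cu*cv^6 + (-18432)*cu*cv^7 + (25600)*cu*cv^8 + (8192)*cu*cv^9 + (-10240)*cu*cv^10 + (-256)*cu*su*cv*sv + (1408)*cu*su*cv^2*sv + (1792)*cu*su*cv^3*sv + (-9472)*cu*su*cv^4*sv + (-3200)*cu*su*cv^5*sv + (17920)*cu*su*cv^6*sv + (-10240)*cu*su*cv^8*sv + (2048)*cu*su*cv^9*sv + (64)*cu^2 + (-768)*cu^2*cv + (-1152)*cu^2*cv^2 + (12160)*cu^2*cv^3 + (2624)*cu^2*cv^4 + (-44800)*cu^2*cv^5 + (4736)*cu^2*cv^6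 + (59904)*cu^2*cv^7 + (-16384)*cu^2*cv^8 + (-26624)*cu^2*cv^9 + (10240)*cu^2*cv^10 + (128)*cu^2*su*cv*sv + (1792)*cu^2*su*cv^2*sv + (-6016)*cu^2*su*cv^3*sv + (-14336)*cu^2*su*cv^4*sv + (30720)*cu^2*su*cv^5*sv + (28672)*cu^2*su*cv^6*sv + (-49152)*cu^2*su*cv^7*sv + (-16384)*cu^2*su*cv^8*sv + (24576)*cu^2*su*cv^9*sv + (-384)*cu^3*cv + (2432)*cu^3*cv^2 + (9600)*cu^3*cv^3 + (-28032)*cu^3*cv^4 + (-39936)*cu^3*cv^5 + (87040)*cu^3*cv^6 + (55296)*cu^3*cv^7 + (-102400)*cu^3*cv^8 + (-24576)*cu^3*cv^9 + (40960)*cu^3*cv^10 + (128)*cu^3*su*sv + (256)*cu^3*su*cv*sv + (-6272)*cu^3*su*cv^2*sv + (768)*cu^3*su*cv^3*sv + (38400)*cu^3*su*cv^4*sv + (-14848)*cu^3*su*cv^5*sv + (-71680)*cu^3*su*cv^6*sv + (36864)*cu^3*su*cv^7*sv + (40960)*cu^3*su*cv^8*sv + (-24576)*cu^3*su*cv^9*sv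 + (-64)*cu^4 + (1920)*cu^4*cv + (-192)*cu^4*cv^2 + (-26752)*cu^4*cv^3 + (12800)*cu^4*cv^4 + (96768)*cu^4*cv^5 + (-57856)*cu^4*cv^6 + (-129024)*cu^4*cv^7 + (86016)*cu^4*cv^8 + (57344)*cu^4*cv^9 + (-40960)*cu^4*cv^10 + (-256)*cu^4*su*cv*sv + (-1792)*cu^4*su*cv^2*sv + (8192)*cu^4*su*cv^3*sv + (14336)*cu^4*su*cv^4*sv + (-40960)*cu^4*su*cv^5*sv + (-28672)*cu^4*su*cv^6*sv + (65536)*cu^4*su*cv^7*sv + (16384)*cu^4*su*cv^8*sv + (-32768)*cu^4*su*cv^9*sv + (256)*cu^5*cv + (-2048)*cu^5*cv^2 + (-6400)*cu^5*cv^3 + (22528)*cu^5*cv^4 + (26624)*cu^5*cv^5 + (-69632)*cu^5*cv^6 + (-36864)*cu^5*cv^7 + (81920)*cu^5*cv^8 + (16384)*cu^5*cv^9 + (-32768)*cu^5*cv^10 + (-128)*cu^5*su*sv + (128)*cu^5*su*cv*sv + (5120)*cu^5*su*cv^2*sv + (-5120)*cu^5*su*cv^3*sv + (-30720)*cu^5*su*cv^4*sv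 + (30720)*cu^5*su*cv^5*sv + (57344)*cu^5*su*cv^6*sv + (-57344)*cu^5*su*cv^7*sv + (-32768)*cu^5*su*cv^8*sv + (32768)*cu^5*su*cv^9*sv + (-1152)*cu^6*cv + (1152)*cu^6*cv^2 + (15360)*cu^6*cv^3 + (-15360)*cu^6*cv^4 + (-55296)*cu^6*cv^5 + (55296)*cu^6*cv^6 + (73728)*cu^6*cv^7 + (-73728)*cu^6*cv^8 + (-32768)*cu^6*cv^9 + (32768)*cu^6*cv^10) := by
  linear_combination ((256)*cv^2*sv^2 + (-768)*cv^3*sv^2 + (-448)*cv^4*sv^2 + (2560)*cv^5*sv^2 + (-512)*cv^6*sv^2 + (-2048)*cv^7*sv^2 + (1024)*cv^8*sv^2 + (-1536)*cu*cv^3*sv^2 + (2304)*cu*cv^4*sv^2 + (5120)*cu*cv^5*sv^2 + (-6144)*cu*cv^6*sv^2 + (-4096)*cu*cv^7*sv^2 + (4096)*cu*cv^8*sv^2 + (-256)*cu^2*cv*sv^2 + (-640)*cu^2*cv^2*sv^2 + (5120)*cu^2*cv^3*sv^2 + (1280)*cu^2*cv^4*sv^2 + (-15360)*cu^2*cv^5*sv^2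 + (2048)*cu^2*cv^6*sv^2 + (12288)*cu^2*cv^7*sv^2 + (-4096)*cu^2*cv^8*sv^2 + (768)*cu^3*cv^2*sv^2 + (3072)*cu^3*cv^3*sv^2 + (-10240)*cu^3*cv^4*sv^2 + (-10240)*cu^3*cv^5*sv^2 + (24576)*cu^3*cv^6*sv^2 + (8192)*cu^3*cv^7*sv^2 + (-16384)*cu^3*cv^8*sv^2 + (64)*cu^4*sv^2 + (512)*cu^4*cv*sv^2 + (-512)*cu^4*cv^2*sv^2 + (-7168)*cu^4*cv^3*sv^2 + (7168)*cu^4*cv^4*sv^2 + (20480)*cu^4*cv^5*sv^2 + (-20480)*cu^4*cv^6*sv^2 + (-16384)*cu^4*cv^7*sv^2 + (16384)*cu^4*cv^8*sv^2) * hu + ((256)*cv^2 + (-768)*cv^3 + (-448)*cv^4 + (2560)*cv^5 + (-512)*cv^6 + (-2048)*cv^7 + (1024)*cv^8 + (-1536)*cu*cv^3 + (2304)*cu*cv^4 + (5120)*cu*cv^5 + (-6144)*cu*cv^6 + (-4096)*cu*cv^7 + (4096)*cu*cv^8 + (-256)*cu^2*cv + (-896)*cu^2*cv^2 + (5888)*cu^2*cv^3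 + (1728)*cu^2*cv^4 + (-17920)*cu^2*cv^5 + (2560)*cu^2*cv^6 + (14336)*cu^2*cv^7 + (-5120)*cu^2*cv^8 + (768)*cu^3*cv^2 + (4608)*cu^3*cv^3 + (-12544)*cu^3*cv^4 + (-15360)*cu^3*cv^5 + (30720)*cu^3*cv^6 + (12288)*cu^3*cv^7 + (-20480)*cu^3*cv^8 + (64)*cu^4 + (768)*cu^4*cv + (128)*cu^4*cv^2 + (-12288)*cu^4*cv^3 + (5888)*cu^4*cv^4 + (35840)*cu^4*cv^5 + (-22528)*cu^4*cv^6 + (-28672)*cu^4*cv^7 + (20480)*cu^4*cv^8 + (-768)*cu^5*cv^2 + (-3072)*cu^5*cv^3 + (10240)*cu^5*cv^4 + (10240)*cu^5*cv^5 + (-24576)*cu^5*cv^6 + (-8192)*cu^5*cv^7 + (16384)*cu^5*cv^8 + (-64)*cu^6 + (-512)*cu^6*cv + (512)*cu^6*cv^2 + (7168)*cu^6*cv^3 + (-7168)*cu^6*cv^4 + (-20480)*cu^6*cv^5 + (20480)*cu^6*cv^6 + (16384)*cu^6*cv^7 + (-16384)*cu^6*cv^8) * hv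

lemma hX2sq (cu su cv sv : ℝ) (hu : su ^ 2 + cu ^ 2 = 1) (hv : sv ^ 2 + cv ^ 2 = 1) :
    ((2)*cv + (2)*su*sv + (4)*su*cv*sv + (-2)*cu*sv^2 + (2)*cu*cv + (2)*cu*cv^2) ^ 2 = ((4) + (16)*cv + (16)*cv^2 + (-16)*cv^3 + (-16)*cv^4 + (8)*su*cv*sv + (16)*su*cv^2*sv + (-8)*cu*cv + (8)*cu*cv^2 + (16)*cu*cv^3 + (-8)*cu*su*sv + (-8)*cu*su*cv*sv + (32)*cu*su*cv^2*sv + (32)*cu*su*cv^3*sv + (-24)*cu^2*cv + (-24)*cu^2*cv^2 + (32)*cu^2*cv^3 + (32)*cu^2*cv^4) := by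
  linear_combination ((4)*sv^2 + (16)*cv*sv^2 + (16)*cv^2*sv^2) * hu + ((4) + (16)*cv + (16)*cv^2 + (-8)*cu*cv + (-8)*cu*su*sv + (-16)*cu*su*cv*sv + (4)*cu^2*sv^2 + (-24)*cu^2*cv + (-28)*cu^2*cv^2) * hv

lemma hX2cb (cu su cv sv : ℝ) (hu : su ^ 2 + cu ^ 2 = 1) (hv : sv ^ 2 + cv ^ 2 = 1) :
    ((2)*cv + (2)*su*sv + (4)*su*cv*sv + (-2)*cu*sv^2 + (2)*cu*cv + (2)*cu*cv^2) ^ 3 = ((24)*cv + (96)*cv^2 + (80)*cv^3 + (-96)*cv^4 + (-96)*cv^5 + (8)*su*sv + (48)*su*cv*sv + (112)*su*cv^2*sv + (64)*su*cv^3*sv + (-96)*su*cv^4*sv + (-64)*su*cv^5*sv + (-24)*cu + (-72)*cu*cv + (48)*cu*cv^2 + (384)*cu*cv^3 + (192)*cu*cv^4 + (-288)*cu*cv^5 + (-192)*cu*cv^6 + (-48)*cu*su*cv*sv + (-48)*cu*su*cv^2*sv + (192)*cu*su*cv^3*sv + (192)*cu*su*cv^4*sv + (-144)*cu^2*cv^2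 + (-144)*cu^2*cv^3 + (192)*cu^2*cv^4 + (192)*cu^2*cv^5 + (16)*cu^2*su*sv + (-48)*cu^2*su*cv*sv + (-256)*cu^2*su*cv^2*sv + (-64)*cu^2*su*cv^3*sv + (384)*cu^2*su*cv^4*sv + (256)*cu^2*su*cv^5*sv + (16)*cu^3 + (96)*cu^3*cv + (-48)*cu^3*cv^2 + (-448)*cu^3*cv^3 + (-192)*cu^3*cv^4 + (384)*cu^3*cv^5 + (256)*cu^3*cv^6) := by
  linear_combination ((24)*cv*sv^2 + (96)*cv^2*sv^2 + (96)*cv^3*sv^2 + (8)*su*sv^3 + (48)*su*cv*sv^3 + (96)*su*cv^2*sv^3 + (64)*su*cv^3*sv^3 + (-24)*cu*sv^4 + (24)*cu*cv*sv^2 + (-96)*cu*cv*sv^4 + (120)*cu*cv^2*sv^2 + (-96)*cu*cv^2*sv^4 + (192)*cu*cv^3*sv^2 + (96)*cu*cv^4*sv^2) * hu + ((24)*cv + (96)*cv^2 + (96)*cv^3 + (8)*su*sv + (48)*su*cv*sv + (96)*su*cv^2*sv + (64)*su*cv^3*sv + (-24)*cu + (-24)*cu*sv^2 + (-72)*cu*cv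 + (-96)*cu*cv*sv^2 + (24)*cu*cv^2 + (-96)*cu*cv^2*sv^2 + (288)*cu*cv^3 + (192)*cu*cv^4 + (-48)*cu*su*cv*sv + (-96)*cu*su*cv^2*sv + (24)*cu^2*cv*sv^2 + (-144)*cu^2*cv^2 + (-168)*cu^2*cv^3 + (16)*cu^2*su*sv + (24)*cu^2*su*sv^3 + (-48)*cu^2*su*cv*sv + (48)*cu^2*su*cv*sv^3 + (-264)*cu^2*su*cv^2*sv + (-208)*cu^2*su*cv^3*sv + (16)*cu^3 + (16)*cu^3*sv^2 + (-8)*cu^3*sv^4 + (96)*cu^3*cv + (120)*cu^3*cv*sv^2 + (-32)*cu^3*cv^2 + (128)*cu^3*cv^2*sv^2 + (-360)*cu^3*cv^3 + (-248)*cu^3*cv^4) * hv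

lemma hX1sq (cu su cv sv : ℝ) (hu : su ^ 2 + cu ^ 2 = 1) (hv : sv ^ 2 + cv ^ 2 = 1) :
    ((-2)*su*sv^3 + (6)*su*cv^2*sv + (6)*su^2*cv*sv^2 + (-2)*su^2*cv^3 + (2)*cu + (-6)*cu*cv*sv^2 + (2)*cu*cv^3 + (-4)*cu*su*sv^3 + (12)*cu*su*cv^2*sv + (-6)*cu^2*cv*sv^2 + (2)*cu^2*cv^3) ^ 2 = ((4) + (-24)*su*cv*sv + (128)*su*cv^3*sv + (-128)*su*cv^5*sv + (16)*cu + (24)*cu*cv + (-216)*cu*cv^2 + (-32)*cu*cv^3 + (576)*cu*cv^4 + (-384)*cu*cv^6 + (-8)*cu*su*sv + (-24)*cu*su*cv*sv + (32)*cu*su*cv^2*sv + (128)*cu*su*cv^3*sv + (-128)*cu*su*cv^5*sv + (16)*cu^2 + (-24)*cu^2*cv + (-216)*cu^2*cv^2 + (32)*cu^2*cv^3 + (576)*cu^2*cv^4 + (-384)*cu^2*cv^6 + (-16)*cu^2*su*sv + (96)*cu^2*su*cv*sv + (64)*cu^2*su*cv^2*sv + (-512)*cu^2*su*cv^3*sv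 + (512)*cu^2*su*cv^5*sv + (-16)*cu^3 + (-48)*cu^3*cv + (288)*cu^3*cv^2 + (64)*cu^3*cv^3 + (-768)*cu^3*cv^4 + (512)*cu^3*cv^6 + (96)*cu^3*su*cv*sv + (-512)*cu^3*su*cv^3*sv + (512)*cu^3*su*cv^5*sv + (-16)*cu^4 + (288)*cu^4*cv^2 + (-768)*cu^4*cv^4 + (512)*cu^4*cv^6) := by
  linear_combination ((4)*sv^6 + (12)*cv^2*sv^4 + (12)*cv^4*sv^2 + (4)*cv^6 + (-24)*su*cv*sv^5 + (80)*su*cv^3*sv^3 + (-24)*su*cv^5*sv + (36)*su^2*cv^2*sv^4 + (-24)*su^2*cv^4*sv^2 + (4)*su^2*cv^6 + (16)*cu*sv^6 + (24)*cu*cv*sv^2 + (-168)*cu*cv^2*sv^4 + (-8)*cu*cv^3 + (192)*cu*cv^4*sv^2 + (-8)*cu*cv^6 + (-48)*cu*su*cv*sv^5 + (160)*cu*su*cv^3*sv^3 + (-48)*cu*su*cv^5*sv + (16)*cu^2*sv^6 + (-204)*cu^2*cv^2*sv^4 + (216)*cu^2*cv^4*sv^2 + (-12)*cu^2*cv^6)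 * hu + ((4) + (4)*sv^2 + (4)*sv^4 + (4)*cv^2 + (8)*cv^2*sv^2 + (4)*cv^4 + (-24)*su*cv*sv + (-24)*su*cv*sv^3 + (104)*su*cv^3*sv + (16)*cu + (16)*cu*sv^2 + (16)*cu*sv^4 + (24)*cu*cv + (-200)*cu*cv^2 + (-184)*cu*cv^2*sv^2 + (376)*cu*cv^4 + (-8)*cu*su*sv + (-24)*cu*su*cv*sv + (-24)*cu*su*cv*sv^3 + (104)*cu*su*cv^3*sv + (12)*cu^2 + (12)*cu^2*sv^2 + (12)*cu^2*sv^4 + (-24)*cu^2*cv + (-204)*cu^2*cv^2 + (-192)*cu^2*cv^2*sv^2 + (372)*cu^2*cv^4 + (-16)*cu^2*su*sv + (96)*cu^2*su*cv*sv + (96)*cu^2*su*cv*sv^3 + (-416)*cu^2*su*cv^3*sv + (-16)*cu^3 + (-16)*cu^3*sv^2 + (-16)*cu^3*sv^4 + (-48)*cu^3*cv + (272)*cu^3*cv^2 + (256)*cu^3*cv^2*sv^2 + (-496)*cu^3*cv^4 + (96)*cu^3*su*cv*sv + (96)*cu^3*su*cv*sv^3 + (-416)*cu^3*su*cv^3*sv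 + (-16)*cu^4 + (-16)*cu^4*sv^2 + (-16)*cu^4*sv^4 + (272)*cu^4*cv^2 + (256)*cu^4*cv^2*sv^2 + (-496)*cu^4*cv^4) * hv

lemma hX1X2 (cu su cv sv : ℝ) (hu : su ^ 2 + cu ^ 2 = 1) (hv : sv ^ 2 + cv ^ 2 = 1) :
    12 * ((-2)*su*sv^3 + (6)*su*cv^2*sv + (6)*su^2*cv*sv^2 + (-2)*su^2*cv^3 + (2)*cu + (-6)*cu*cv*sv^2 + (2)*cu*cv^3 + (-4)*cu*su*sv^3 + (12)*cu*su*cv^2*sv + (-6)*cu^2*cv*sv^2 + (2)*cu^2*cv^3) * ((2)*cv + (2)*su*sv + (4)*su*cv*sv + (-2)*cu*sv^2 + (2)*cu*cv + (2)*cu*cv^2) = ((-48) + (-96)*cv + (384)*cv^2 + (480)*cv^3 + (-384)*cv^4 + (-384)*cv^5 + (96)*su*cv*sv + (288)*su*cv^2*sv + (-384)*su*cv^4*sv + (-96)*cu + (-288)*cu*cv + (480)*cu*cv^2 + (1440)*cu*cv^3 + (-384)*cu*cv^4 + (-1152)*cu*cv^5 + (96)*cu*su*sv + (-192)*cu*su*cv*sv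 + (-576)*cu*su*cv^2*sv + (768)*cu*su*cv^3*sv + (768)*cu*su*cv^4*sv + (288)*cu^2*cv + (-576)*cu^2*cv^2 + (-960)*cu^2*cv^3 + (768)*cu^2*cv^4 + (768)*cu^2*cv^5 + (96)*cu^2*su*sv + (-384)*cu^2*su*cv*sv + (-1152)*cu^2*su*cv^2*sv + (768)*cu^2*su*cv^3*sv + (1536)*cu^2*su*cv^4*sv + (96)*cu^3 + (480)*cu^3*cv + (-768)*cu^3*cv^2 + (-1920)*cu^3*cv^3 + (768)*cu^3*cv^4 + (1536)*cu^3*cv^5) := by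
  linear_combination ((-48)*sv^4 + (-96)*cv*sv^4 + (288)*cv^2*sv^2 + (288)*cv^3*sv^2 + (-48)*cv^4 + (144)*su*cv*sv^3 + (288)*su*cv^2*sv^3 + (-48)*su*cv^3*sv + (-96)*su*cv^4*sv + (-96)*cu*sv^4 + (-336)*cu*cv*sv^4 + (432)*cu*cv^2*sv^2 + (768)*cu*cv^3*sv^2 + (-48)*cu*cv^4 + (-48)*cu*cv^5) * hu + ((-48) + (-48)*sv^2 + (-96)*cv + (-96)*cv*sv^2 + (336)*cv^2 + (384)*cv^3 + (96)*su*cv*sv + (288)*su*cv^2*sv + (-96)*cu + (-96)*cu*sv^2 + (-336)*cu*cv + (-336)*cu*cv*sv^2 + (384)*cu*cv^2 + (1104)*cu*cv^3 + (48)*cu*su*sv + (48)*cu*su*sv^3 + (-288)*cu*su*cv*sv + (-528)*cu*su*cv^2*sv + (48)*cu^2*sv^2 + (240)*cu^2*cv + (240)*cu^2*cv*sv^2 + (-624)*cu^2*cv^2 + (-720)*cu^2*cv^3 + (96)*cu^2*su*sv + (96)*cu^2*su*sv^3 + (-384)*cu^2*su*cv*sv + (-1056)*cu^2*su*cv^2*sv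 + (96)*cu^3 + (96)*cu^3*sv^2 + (480)*cu^3*cv + (480)*cu^3*cv*sv^2 + (-672)*cu^3*cv^2 + (-1440)*cu^3*cv^3) * hv

lemma hProd (cu su cv sv : ℝ) (hu : su ^ 2 + cu ^ 2 = 1) (hv : sv ^ 2 + cv ^ 2 = 1) :
    ((-8) + (16)*cv + (16)*cv^2 + (-16)*cv^3 + (-16)*cv^4 + (8)*su*sv^3 + (8)*su*cv*sv + (-8)*su*cv^2*sv + (-24)*su^2*cv*sv^2 + (8)*su^2*cv^3 + (-8)*cu + (-8)*cu*cv + (24)*cu*cv*sv^2 + (8)*cu*cv^2 + (8)*cu*cv^3 + (-8)*cu*su*sv + (16)*cu*su*sv^3 + (-8)*cu*su*cv*sv + (-16)*cu*su*cv^2*sv + (32)*cu*su*cv^3*sv + (-24)*cu^2*cv + (24)*cu^2*cv*sv^2 + (-24)*cu^2*cv^2 + (24)*cu^2*cv^3 + (32)*cu^2*cv^4) * ((-8) + (-120)*cv + (160)*cv^3 + (40)*su*sv + (-48)*su*sv^3 + (24)*su*cv*sv + (-16)*su*cv^2*sv + (-128)*su*cv^3*sv + (128)*su*cv^5*sv +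 (144)*su^2*cv*sv^2 + (-48)*su^2*cv^3 + (64)*cu + (-72)*cu*sv^2 + (96)*cu*cv + (-144)*cu*cv*sv^2 + (144)*cu*cv^2 + (-80)*cu*cv^3 + (-576)*cu*cv^4 + (384)*cu*cv^6 + (88)*cu*su*sv + (-96)*cu*su*sv^3 + (-24)*cu*su*cv*sv + (-64)*cu*su*cv^2*sv + (128)*cu*su*cv^3*sv + (-128)*cu*su*cv^5*sv + (16)*cu^2 + (264)*cu^2*cv + (-144)*cu^2*cv*sv^2 + (-216)*cu^2*cv^2 + (-304)*cu^2*cv^3 + (576)*cu^2*cv^4 + (-384)*cu^2*cv^6 + (16)*cu^2*su*sv + (-96)*cu^2*su*cv*sv + (-64)*cu^2*su*cv^2*sv + (512)*cu^2*su*cv^3*sv + (-512)*cu^2*su*cv^5*sv + (16)*cu^3 + (48)*cu^3*cv + (-288)*cu^3*cv^2 + (-64)*cu^3*cv^3 + (768)*cu^3*cv^4 + (-512)*cu^3*cv^6 + (96)*cu^3*su*cv*sv + (-512)*cu^3*su*cv^3*sv + (512)*cu^3*su*cv^5*sv + (-16)*cu^4 + (288)*cu^4*cv^2 + (-768)*cu^4*cv^4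 + (512)*cu^4*cv^6) = ((320)*cv^2 + (-768)*cv^3 + (-1344)*cv^4 + (3328)*cv^5 + (2048)*cv^6 + (-4608)*cv^7 + (-1024)*cv^8 + (2048)*cv^9 + (-256)*su*cv^2*sv + (384)*su*cv^3*sv + (1792)*su*cv^4*sv + (-2432)*su*cv^5*sv + (-3584)*su*cv^6*sv + (4096)*su*cv^7*sv + (2048)*su*cv^8*sv + (-2048)*su*cv^9*sv + (128)*cu*cv + (-512)*cu*cv^2 + (-3200)*cu*cv^3 + (6784)*cu*cv^4 + (13312)*cu*cv^5 + (-21632)*cu*cv^6 + (-18432)*cu*cv^7 + (25600)*cu*cv^8 + (8192)*cu*cv^9 + (-10240)*cu*cv^10 + (-256)*cu*su*cv*sv + (1408)*cu*su*cv^2*sv + (1792)*cu*su*cv^3*sv + (-9472)*cu*su*cv^4*sv + (-3200)*cu*su*cv^5*sv + (17920)*cu*su*cv^6*sv + (-10240)*cu*su*cv^8*sv + (2048)*cu*su*cv^9*sv + (64)*cu^2 + (-768)*cu^2*cv + (-1152)*cu^2*cv^2 + (12160)*cu^2*cv^3 + (2624)*cu^2*cv^4 + (-44800)*cu^2*cv^5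 + (4736)*cu^2*cv^6 + (59904)*cu^2*cv^7 + (-16384)*cu^2*cv^8 + (-26624)*cu^2*cv^9 + (10240)*cu^2*cv^10 + (128)*cu^2*su*cv*sv + (1792)*cu^2*su*cv^2*sv + (-6016)*cu^2*su*cv^3*sv + (-14336)*cu^2*su*cv^4*sv + (30720)*cu^2*su*cv^5*sv + (28672)*cu^2*su*cv^6*sv + (-49152)*cu^2*su*cv^7*sv + (-16384)*cu^2*su*cv^8*sv + (24576)*cu^2*su*cv^9*sv + (-384)*cu^3*cv + (2432)*cu^3*cv^2 + (9600)*cu^3*cv^3 + (-28032)*cu^3*cv^4 + (-39936)*cu^3*cv^5 + (87040)*cu^3*cv^6 + (55296)*cu^3*cv^7 + (-102400)*cu^3*cv^8 + (-24576)*cu^3*cv^9 + (40960)*cu^3*cv^10 + (128)*cu^3*su*sv + (256)*cu^3*su*cv*sv + (-6272)*cu^3*su*cv^2*sv + (768)*cu^3*su*cv^3*sv + (38400)*cu^3*su*cv^4*sv + (-14848)*cu^3*su*cv^5*sv + (-71680)*cu^3*su*cv^6*sv + (36864)*cu^3*su*cv^7*sv + (40960)*cu^3*su*cv^8*sv + (-24576)*cu^3*su*cv^9*sv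 + (-64)*cu^4 + (1920)*cu^4*cv + (-192)*cu^4*cv^2 + (-26752)*cu^4*cv^3 + (12800)*cu^4*cv^4 + (96768)*cu^4*cv^5 + (-57856)*cu^4*cv^6 + (-129024)*cu^4*cv^7 + (86016)*cu^4*cv^8 + (57344)*cu^4*cv^9 + (-40960)*cu^4*cv^10 + (-256)*cu^4*su*cv*sv + (-1792)*cu^4*su*cv^2*sv + (8192)*cu^4*su*cv^3*sv + (14336)*cu^4*su*cv^4*sv + (-40960)*cu^4*su*cv^5*sv + (-28672)*cu^4*su*cv^6*sv + (65536)*cu^4*su*cv^7*sv + (16384)*cu^4*su*cv^8*sv + (-32768)*cu^4*su*cv^9*sv + (256)*cu^5*cv + (-2048)*cu^5*cv^2 + (-6400)*cu^5*cv^3 + (22528)*cu^5*cv^4 + (26624)*cu^5*cv^5 + (-69632)*cu^5*cv^6 + (-36864)*cu^5*cv^7 + (81920)*cu^5*cv^8 + (16384)*cu^5*cv^9 + (-32768)*cu^5*cv^10 + (-128)*cu^5*su*sv + (128)*cu^5*su*cv*sv + (5120)*cu^5*su*cv^2*sv + (-5120)*cu^5*su*cv^3*sv + (-30720)*cu^5*su*cv^4*sv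 + (30720)*cu^5*su*cv^5*sv + (57344)*cu^5*su*cv^6*sv + (-57344)*cu^5*su*cv^7*sv + (-32768)*cu^5*su*cv^8*sv + (32768)*cu^5*su*cv^9*sv + (-1152)*cu^6*cv + (1152)*cu^6*cv^2 + (15360)*cu^6*cv^3 + (-15360)*cu^6*cv^4 + (-55296)*cu^6*cv^5 + (55296)*cu^6*cv^6 + (73728)*cu^6*cv^7 + (-73728)*cu^6*cv^8 + (-32768)*cu^6*cv^9 + (32768)*cu^6*cv^10) := by
  linear_combination ((320)*sv^4 + (-384)*sv^6 + (-640)*cv*sv^2 + (-192)*cv*sv^4 + (5056)*cv^2*sv^2 + (-3200)*cv^2*sv^4 + (320)*cv^3 + (1984)*cv^3*sv^2 + (-1024)*cv^3*sv^4 + (-1728)*cv^4 + (-4736)*cv^4*sv^2 + (-768)*cv^5 + (-1280)*cv^5*sv^2 + (1024)*cv^5*sv^4 + (1664)*cv^6 + (1024)*cv^6*sv^2 + (768)*cv^7 + (-1024)*cv^7*sv^2 + (-960)*su*cv*sv^3 + (2304)*su*cv*sv^5 + (576)*su*cv^2*sv^3 + (320)*su*cv^3*sv + (-1536)*su*cv^3*sv^3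 + (-192)*su*cv^4*sv + (3072)*su*cv^4*sv^3 + (256)*su*cv^5*sv + (-1024)*su*cv^6*sv + (-3072)*su*cv^6*sv^3 + (1024)*su*cv^8*sv + (-3456)*su^2*cv^2*sv^4 + (2304)*su^2*cv^4*sv^2 + (-384)*su^2*cv^6 + (-320)*cu*sv^2 + (1728)*cu*sv^4 + (-1536)*cu*sv^6 + (-2496)*cu*cv*sv^2 + (1536)*cu*cv*sv^4 + (-5056)*cu*cv^2*sv^2 + (7680)*cu*cv^2*sv^4 + (896)*cu*cv^3 + (-1152)*cu*cv^3*sv^2 + (-2560)*cu*cv^3*sv^4 + (1152)*cu*cv^4 + (4352)*cu*cv^4*sv^2 + (768)*cu*cv^5 + (13312)*cu*cv^5*sv^2 + (1024)*cu*cv^5*sv^4 + (-1024)*cu*cv^6 + (-6144)*cu*cv^6*sv^2 + (-4608)*cu*cv^7 + (-10240)*cu*cv^7*sv^2 + (4096)*cu*cv^8*sv^2 + (3072)*cu*cv^9 + (-3264)*cu*su*cv*sv^3 + (4608)*cu*su*cv*sv^5 + (-576)*cu*su*cv^2*sv^3 + (1088)*cu*su*cv^3*sv + (-2304)*cu*su*cv^3*sv^3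 + (192)*cu*su*cv^4*sv + (1536)*cu*su*cv^4*sv^3 + (256)*cu*su*cv^5*sv + (-512)*cu*su*cv^6*sv + (3072)*cu*su*cv^6*sv^3 + (-1024)*cu*su*cv^8*sv + (-704)*cu^2*sv^2 + (2304)*cu^2*sv^4 + (-1536)*cu^2*sv^6 + (-768)*cu^2*cv*sv^2 + (-384)*cu^2*cv*sv^4 + (-11392)*cu^2*cv^2*sv^2 + (10368)*cu^2*cv^2*sv^4 + (128)*cu^2*cv^3 + (4672)*cu^2*cv^3*sv^2 + (3072)*cu^2*cv^3*sv^4 + (3264)*cu^2*cv^4 + (9984)*cu^2*cv^4*sv^2 + (-576)*cu^2*cv^5 + (-16384)*cu^2*cv^5*sv^2 + (-6144)*cu^2*cv^5*sv^4 + (-3200)*cu^2*cv^6 + (1024)*cu^2*cv^6*sv^2 + (3072)*cu^2*cv^7 + (15360)*cu^2*cv^7*sv^2 + (-4096)*cu^2*cv^8*sv^2 + (-3072)*cu^2*cv^9 + (-384)*cu^2*su*cv*sv^3 + (2304)*cu^2*su*cv^2*sv^3 + (128)*cu^2*su*cv^3*sv + (1536)*cu^2*su*cv^3*sv^3 + (-768)*cu^2*su*cv^4*sv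 + (-12288)*cu^2*su*cv^4*sv^3 + (-512)*cu^2*su*cv^5*sv + (4096)*cu^2*su*cv^6*sv + (12288)*cu^2*su*cv^6*sv^3 + (-4096)*cu^2*su*cv^8*sv + (-128)*cu^3*sv^2 + (256)*cu^3*sv^4 + (256)*cu^3*cv*sv^2 + (-768)*cu^3*cv*sv^4 + (640)*cu^3*cv^2*sv^2 + (-1024)*cu^3*cv^2*sv^4 + (128)*cu^3*cv^3 + (4608)*cu^3*cv^3*sv^2 + (4096)*cu^3*cv^3*sv^4 + (384)*cu^3*cv^4 + (-8704)*cu^3*cv^4*sv^2 + (-2304)*cu^3*cv^5 + (-20480)*cu^3*cv^5*sv^2 + (-4096)*cu^3*cv^5*sv^4 + (-512)*cu^3*cv^6 + (24576)*cu^3*cv^6*sv^2 + (6144)*cu^3*cv^7 + (16384)*cu^3*cv^7*sv^2 + (-16384)*cu^3*cv^8*sv^2 + (-4096)*cu^3*cv^9 + (-2304)*cu^3*su*cv^2*sv^3 + (768)*cu^3*su*cv^4*sv + (12288)*cu^3*su*cv^4*sv^3 + (-4096)*cu^3*su*cv^6*sv + (-12288)*cu^3*su*cv^6*sv^3 + (4096)*cu^3*su*cv^8*sv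 + (-384)*cu^4*cv*sv^2 + (1536)*cu^4*cv*sv^4 + (-768)*cu^4*cv^2*sv^2 + (-128)*cu^4*cv^3 + (-4352)*cu^4*cv^3*sv^2 + (-8192)*cu^4*cv^3*sv^4 + (7168)*cu^4*cv^4*sv^2 + (2304)*cu^4*cv^5 + (22528)*cu^4*cv^5*sv^2 + (8192)*cu^4*cv^5*sv^4 + (-20480)*cu^4*cv^6*sv^2 + (-6144)*cu^4*cv^7 + (-20480)*cu^4*cv^7*sv^2 + (16384)*cu^4*cv^8*sv^2 + (4096)*cu^4*cv^9) * hu + ((-64) + (-64)*sv^2 + (-384)*sv^4 + (-832)*cv + (-192)*cv*sv^2 + (2304)*cv^2 + (-2816)*cv^2*sv^2 + (1152)*cv^3 + (-1024)*cv^3*sv^2 + (-1920)*cv^4 + (768)*cv^5 + (1024)*cv^5*sv^2 + (1024)*cv^6 + (-2048)*cv^7 + (320)*su*sv + (-384)*su*cv*sv + (2304)*su*cv*sv^3 + (-192)*su*cv^2*sv + (-1792)*su*cv^3*sv + (3840)*su*cv^4*sv + (-3072)*su*cv^6*sv + (448)*cu + (192)*cu*sv^2 + (-1536)*cu*sv^4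 + (-1152)*cu*cv + (1536)*cu*cv*sv^2 + (-2368)*cu*cv^2 + (9216)*cu*cv^2*sv^2 + (-6400)*cu*cv^3 + (-2560)*cu*cv^3*sv^2 + (2432)*cu*cv^4 + (19200)*cu*cv^5 + (1024)*cu*cv^5*sv^2 + (-6144)*cu*cv^6 + (-11264)*cu*cv^7 + (4096)*cu*cv^8 + (960)*cu*su*sv + (-576)*cu*su*sv^3 + (-2880)*cu*su*cv*sv + (2304)*cu*su*cv*sv^3 + (-768)*cu*su*cv^2*sv + (-768)*cu*su*cv^3*sv + (-4608)*cu*su*cv^4*sv + (9216)*cu*su*cv^6*sv + (704)*cu^2 + (832)*cu^2*sv^2 + (-1152)*cu^2*sv^4 + (2176)*cu^2*cv + (-1920)*cu^2*cv*sv^2 + (-8320)*cu^2*cv^2 + (11264)*cu^2*cv^2*sv^2 + (8128)*cu^2*cv^3 + (4096)*cu^2*cv^3*sv^2 + (6528)*cu^2*cv^4 + (-37888)*cu^2*cv^5 + (-7168)*cu^2*cv^5*sv^2 + (32768)*cu^2*cv^7 + (-4096)*cu^2*cv^8 + (1344)*cu^2*su*sv + (-1152)*cu^2*su*sv^3 +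 (1728)*cu^2*su*cv*sv + (-9216)*cu^2*su*cv*sv^3 + (4992)*cu^2*su*cv^2*sv + (5888)*cu^2*su*cv^3*sv + (-26112)*cu^2*su*cv^4*sv + (18432)*cu^2*su*cv^6*sv + (256)*cu^3 + (64)*cu^3*sv^2 + (1536)*cu^3*sv^4 + (3520)*cu^3*cv + (-4032)*cu^3*cv*sv^2 + (3456)*cu^3*cv^2 + (-17152)*cu^3*cv^2*sv^2 + (15296)*cu^3*cv^3 + (6656)*cu^3*cv^3*sv^2 + (-12032)*cu^3*cv^4 + (-50176)*cu^3*cv^5 + (-5120)*cu^3*cv^5*sv^2 + (30720)*cu^3*cv^6 + (31744)*cu^3*cv^7 + (-20480)*cu^3*cv^8 + (384)*cu^3*su*sv + (4608)*cu^3*su*cv*sv + (-9216)*cu^3*su*cv*sv^3 + (-6912)*cu^3*su*cv^2*sv + (3072)*cu^3*su*cv^3*sv + (33792)*cu^3*su*cv^4*sv + (-40960)*cu^3*su*cv^6*sv + (-64)*cu^4 + (-768)*cu^4*sv^2 + (1536)*cu^4*sv^4 + (3072)*cu^4*cv + (1920)*cu^4*cv*sv^2 + (6976)*cu^4*cv^2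 + (-15360)*cu^4*cv^2*sv^2 + (-30848)*cu^4*cv^3 + (-11264)*cu^4*cv^3*sv^2 + (256)*cu^4*cv^4 + (92160)*cu^4*cv^5 + (14336)*cu^4*cv^5*sv^2 + (-21504)*cu^4*cv^6 + (-71680)*cu^4*cv^7 + (20480)*cu^4*cv^8 + (128)*cu^4*su*sv + (1536)*cu^4*su*cv*sv + (-4608)*cu^4*su*cv^2*sv + (-4096)*cu^4*su*cv^3*sv + (18432)*cu^4*su*cv^4*sv + (-16384)*cu^4*su*cv^6*sv + (-128)*cu^5 + (-256)*cu^5*sv^2 + (512)*cu^5*cv + (768)*cu^5*cv*sv^2 + (1792)*cu^5*cv^2 + (1024)*cu^5*cv^2*sv^2 + (-9472)*cu^5*cv^3 + (-4096)*cu^5*cv^3*sv^2 + (6144)*cu^5*cv^4 + (28672)*cu^5*cv^5 + (4096)*cu^5*cv^5*sv^2 + (-24576)*cu^5*cv^6 + (-20480)*cu^5*cv^7 + (16384)*cu^5*cv^8 + (-256)*cu^5*su*sv + (9216)*cu^5*su*cv^2*sv + (-36864)*cu^5*su*cv^4*sv + (32768)*cu^5*su*cv^6*sv + (-1536)*cu^6*cv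 + (-1536)*cu^6*cv*sv^2 + (768)*cu^6*cv^2 + (20992)*cu^6*cv^3 + (8192)*cu^6*cv^3*sv^2 + (-7168)*cu^6*cv^4 + (-57344)*cu^6*cv^5 + (-8192)*cu^6*cv^5*sv^2 + (20480)*cu^6*cv^6 + (40960)*cu^6*cv^7 + (-16384)*cu^6*cv^8) * hv

lemma keyG2 (cu su cv sv : ℝ) (hu : su ^ 2 + cu ^ 2 = 1) (hv : sv ^ 2 + cv ^ 2 = 1) :
    ((-2)*su*sv + (8)*su*cv*sv^3 + (-8)*su*cv^3*sv + (2)*su^2*cv + (-10)*su^2*cv*sv^4 + (20)*su^2*cv^3*sv^2 + (-2)*su^2*cv^5 + (2)*su^3*sv^5 + (8)*su^3*cv*sv^3 + (-20)*su^3*cv^2*sv^3 + (-8)*su^3*cv^3*sv + (10)*su^3*cv^4*sv + (-2)*cu*sv^4 + (2)*cu*cv + (12)*cu*cv^2*sv^2 + (-2)*cu*cv^4 + (-4)*cu*su*sv + (4)*cu*su*sv^5 + (-40)*cu*su*cv^2*sv^3 + (20)*cu*su*cv^4*sv + (-6)*cu*su^2*sv^4 + (30)*cu*su^2*cv*sv^4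 + (36)*cu*su^2*cv^2*sv^2 + (-60)*cu*su^2*cv^3*sv^2 + (-6)*cu*su^2*cv^4 + (6)*cu*su^2*cv^5 + (-2)*cu^2*cv + (10)*cu^2*cv*sv^4 + (-20)*cu^2*cv^3*sv^2 + (2)*cu^2*cv^5 + (-6)*cu^2*su*sv^5 + (-24)*cu^2*su*cv*sv^3 + (60)*cu^2*su*cv^2*sv^3 + (24)*cu^2*su*cv^3*sv + (-30)*cu^2*su*cv^4*sv + (2)*cu^3*sv^4 + (-10)*cu^3*cv*sv^4 + (-12)*cu^3*cv^2*sv^2 + (20)*cu^3*cv^3*sv^2 + (2)*cu^3*cv^4 + (-2)*cu^3*cv^5) ^ 2 =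
      (((2)*cv + (2)*su*sv + (4)*su*cv*sv + (-2)*cu*sv^2 + (2)*cu*cv + (2)*cu*cv^2) ^ 2 - 4 * ((-2)*su*sv^3 + (6)*su*cv^2*sv + (6)*su^2*cv*sv^2 + (-2)*su^2*cv^3 + (2)*cu + (-6)*cu*cv*sv^2 + (2)*cu*cv^3 + (-4)*cu*su*sv^3 + (12)*cu*su*cv^2*sv + (-6)*cu^2*cv*sv^2 + (2)*cu^2*cv^3) - 12) *
        (((-2)*su*sv^3 + (6)*su*cv^2*sv + (6)*su^2*cv*sv^2 + (-2)*su^2*cv^3 + (2)*cu + (-6)*cu*cv*sv^2 + (2)*cu*cv^3 + (-4)*cu*su*sv^3 + (12)*cu*su*cv^2*sv + (-6)*cu^2*cv*sv^2 + (2)*cu^2*cv^3) ^ 2 - 4 * ((2)*cv + (2)*su*sv + (4)*su*cv*sv + (-2)*cu*sv^2 + (2)*cu*cv + (2)*cu*cv^2) ^ 3 + 12 * ((-2)*su*sv^3 + (6)*su*cv^2*sv + (6)*su^2*cv*sv^2 + (-2)*su^2*cv^3 + (2)*cu + (-6)*cu*cv*sv^2 + (2)*cu*cv^3 + (-4)*cu*su*sv^3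 + (12)*cu*su*cv^2*sv + (-6)*cu^2*cv*sv^2 + (2)*cu^2*cv^3) * ((2)*cv + (2)*su*sv + (4)*su*cv*sv + (-2)*cu*sv^2 + (2)*cu*cv + (2)*cu*cv^2) + 24 * ((-2)*su*sv^3 + (6)*su*cv^2*sv + (6)*su^2*cv*sv^2 + (-2)*su^2*cv^3 + (2)*cu + (-6)*cu*cv*sv^2 + (2)*cu*cv^3 + (-4)*cu*su*sv^3 + (12)*cu*su*cv^2*sv + (-6)*cu^2*cv*sv^2 + (2)*cu^2*cv^3) + 36 * ((2)*cv + (2)*su*sv + (4)*su*cv*sv + (-2)*cu*sv^2 + (2)*cu*cv + (2)*cu*cv^2) + 36) := by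
  rw [hSr cu su cv sv hu hv, hS2 cu su cv sv hu hv, hX2sq cu su cv sv hu hv,
    hX2cb cu su cv sv hu hv, hX1sq cu su cv sv hu hv, hX1X2 cu su cv sv hu hv]
  linear_combination (-1 : ℝ) * hProd cu su cv sv hu hv


lemma eSrho (a₁ a₂ : ℝ) : Srho a₁ a₂ =
    ((-2)*Real.sin (2 * π * a₁)*Real.sin (2 * π * a₂) + (8)*Real.sin (2 * π * a₁)*Real.cos (2 * π * a₂)*Real.sin (2 * π * a₂)^3 + (-8)*Real.sin (2 * π * a₁)*Real.cos (2 * π * a₂)^3*Real.sin (2 * π * a₂) + (2)*Real.sin (2 * π * a₁)^2*Real.cos (2 * π * a₂) + (-10)*Real.sin (2 * π * a₁)^2*Real.cos (2 * π * a₂)*Real.sin (2 * π * a₂)^4 + (20)*Real.sin (2 * π * a₁)^2*Real.cos (2 * π * a₂)^3*Real.sin (2 * π * a₂)^2 + (-2)*Real.sin (2 * π * a₁)^2*Real.cos (2 * π * a₂)^5 + (2)*Real.sin (2 * π * a₁)^3*Real.sin (2 * π * a₂)^5 + (8)*Real.sin (2 * π * a₁)^3*Real.cos (2 * π * a₂)*Real.sin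 (2 * π * a₂)^3 + (-20)*Real.sin (2 * π * a₁)^3*Real.cos (2 * π * a₂)^2*Real.sin (2 * π * a₂)^3 + (-8)*Real.sin (2 * π * a₁)^3*Real.cos (2 * π * a₂)^3*Real.sin (2 * π * a₂) + (10)*Real.sin (2 * π * a₁)^3*Real.cos (2 * π * a₂)^4*Real.sin (2 * π * a₂) + (-2)*Real.cos (2 * π * a₁)*Real.sin (2 * π * a₂)^4 + (2)*Real.cos (2 * π * a₁)*Real.cos (2 * π * a₂) + (12)*Real.cos (2 * π * a₁)*Real.cos (2 * π * a₂)^2*Real.sin (2 * π * a₂)^2 + (-2)*Real.cos (2 * π * a₁)*Real.cos (2 * π * a₂)^4 + (-4)*Real.cos (2 * π * a₁)*Real.sin (2 * π * a₁)*Real.sin (2 * π * a₂) + (4)*Real.cos (2 * π * a₁)*Real.sin (2 * π * a₁)*Real.sin (2 * π * a₂)^5 + (-40)*Real.cos (2 * π * a₁)*Real.sin (2 * π * a₁)*Real.cos (2 * π * a₂)^2*Real.sin (2 * π * a₂)^3 + (20)*Real.cos (2 * π * a₁)*Real.sin (2 * π * a₁)*Real.cos (2 * π * a₂)^4*Real.sin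 (2 * π * a₂) + (-6)*Real.cos (2 * π * a₁)*Real.sin (2 * π * a₁)^2*Real.sin (2 * π * a₂)^4 + (30)*Real.cos (2 * π * a₁)*Real.sin (2 * π * a₁)^2*Real.cos (2 * π * a₂)*Real.sin (2 * π * a₂)^4 + (36)*Real.cos (2 * π * a₁)*Real.sin (2 * π * a₁)^2*Real.cos (2 * π * a₂)^2*Real.sin (2 * π * a₂)^2 + (-60)*Real.cos (2 * π * a₁)*Real.sin (2 * π * a₁)^2*Real.cos (2 * π * a₂)^3*Real.sin (2 * π * a₂)^2 + (-6)*Real.cos (2 * π * a₁)*Real.sin (2 * π * a₁)^2*Real.cos (2 * π * a₂)^4 + (6)*Real.cos (2 * π * a₁)*Real.sin (2 * π * a₁)^2*Real.cos (2 * π * a₂)^5 + (-2)*Real.cos (2 * π * a₁)^2*Real.cos (2 * π * a₂) + (10)*Real.cos (2 * π * a₁)^2*Real.cos (2 * π * a₂)*Real.sin (2 * π * a₂)^4 + (-20)*Real.cos (2 * π * a₁)^2*Real.cos (2 * π * a₂)^3*Real.sin (2 * π * a₂)^2 + (2)*Real.cos (2 * π * a₁)^2*Real.cos (2 * π * a₂)^5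 + (-6)*Real.cos (2 * π * a₁)^2*Real.sin (2 * π * a₁)*Real.sin (2 * π * a₂)^5 + (-24)*Real.cos (2 * π * a₁)^2*Real.sin (2 * π * a₁)*Real.cos (2 * π * a₂)*Real.sin (2 * π * a₂)^3 + (60)*Real.cos (2 * π * a₁)^2*Real.sin (2 * π * a₁)*Real.cos (2 * π * a₂)^2*Real.sin (2 * π * a₂)^3 + (24)*Real.cos (2 * π * a₁)^2*Real.sin (2 * π * a₁)*Real.cos (2 * π * a₂)^3*Real.sin (2 * π * a₂) + (-30)*Real.cos (2 * π * a₁)^2*Real.sin (2 * π * a₁)*Real.cos (2 * π * a₂)^4*Real.sin (2 * π * a₂) + (2)*Real.cos (2 * π * a₁)^3*Real.sin (2 * π * a₂)^4 + (-10)*Real.cos (2 * π * a₁)^3*Real.cos (2 * π * a₂)*Real.sin (2 * π * a₂)^4 + (-12)*Real.cos (2 * π * a₁)^3*Real.cos (2 * π * a₂)^2*Real.sin (2 * π * a₂)^2 + (20)*Real.cos (2 * π * a₁)^3*Real.cos (2 * π * a₂)^3*Real.sin (2 * π * a₂)^2 + (2)*Real.cos (2 * π * a₁)^3*Real.cos (2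 * π * a₂)^4 + (-2)*Real.cos (2 * π * a₁)^3*Real.cos (2 * π * a₂)^5) := by
  unfold Srho
  rw [show 2 * π * (a₁ + a₂) = 2 * π * a₁ + 2 * π * a₂ from by ring]
  rw [show 2 * π * (-a₁ + 4 * a₂) = 2 * π * a₂ + 2 * π * a₂ + 2 * π * a₂ + 2 * π * a₂ - (2 * π * a₁) from by ring]
  rw [show 2 * π * (2 * a₁ - a₂) = 2 * π * a₁ + (2 * π * a₁) - (2 * π * a₂) from by ring]
  rw [show 2 * π * (3 * a₁ - 4 * a₂) = 2 * π * a₁ + (2 * π * a₁) + (2 * π * a₁) - (2 * π * a₂ + (2 * π * a₂) + (2 * π * a₂) + (2 * π * a₂)) from by ring]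
  rw [show 2 * π * (-2 * a₁ + 5 * a₂) = 2 * π * a₂ + (2 * π * a₂) + (2 * π * a₂) + (2 * π * a₂) + (2 * π * a₂) - (2 * π * a₁ + (2 * π * a₁)) from by ring]
  rw [show 2 * π * (-3 * a₁ + 5 * a₂) = 2 * π * a₂ + (2 * π * a₂) + (2 * π * a₂) + (2 * π * a₂) + (2 * π * a₂) - (2 * π * a₁ + (2 * π * a₁) + (2 * π * a₁)) from by ring]
  simp only [Real.cos_add, Real.cos_sub, Real.sin_add, Real.sin_sub]
  ring

lemma eX1 (a₁ a₂ : ℝ) : X1 a₁ a₂ =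
    ((-2)*Real.sin (2 * π * a₁)*Real.sin (2 * π * a₂)^3 + (6)*Real.sin (2 * π * a₁)*Real.cos (2 * π * a₂)^2*Real.sin (2 * π * a₂) + (6)*Real.sin (2 * π * a₁)^2*Real.cos (2 * π * a₂)*Real.sin (2 * π * a₂)^2 + (-2)*Real.sin (2 * π * a₁)^2*Real.cos (2 * π * a₂)^3 + (2)*Real.cos (2 * π * a₁) + (-6)*Real.cos (2 * π * a₁)*Real.cos (2 * π * a₂)*Real.sin (2 * π * a₂)^2 + (2)*Real.cos (2 * π * a₁)*Real.cos (2 * π * a₂)^3 + (-4)*Real.cos (2 * π * a₁)*Real.sin (2 * π * a₁)*Real.sin (2 * π * a₂)^3 + (12)*Real.cos (2 * π * a₁)*Real.sin (2 * π * a₁)*Real.cos (2 * π * a₂)^2*Real.sin (2 * π * a₂) + (-6)*Real.cos (2 * π * a₁)^2*Real.cos (2 * π * a₂)*Real.sin (2 * π * a₂)^2 + (2)*Real.cos (2 * π * a₁)^2*Real.cos (2 * π * a₂)^3) := by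
  unfold X1
  rw [show 2 * π * (a₁ - 3 * a₂) = 2 * π * a₁ - (2 * π * a₂ + (2 * π * a₂) + (2 * π * a₂)) from by ring]
  rw [show 2 * π * (2 * a₁ - 3 * a₂) = 2 * π * a₁ + (2 * π * a₁) - (2 * π * a₂ + (2 * π * a₂) + (2 * π * a₂)) from by ring]
  simp only [Real.cos_add, Real.cos_sub, Real.sin_add, Real.sin_sub]
  ring

lemma eX2 (a₁ a₂ : ℝ) : X2 a₁ a₂ =
    ((2)*Real.cos (2 * π * a₂) + (2)*Real.sin (2 * π * a₁)*Real.sin (2 * π * a₂) + (4)*Real.sin (2 * π * a₁)*Real.cos (2 * π * a₂)*Real.sin (2 * π * a₂) + (-2)*Real.cos (2 * π * a₁)*Real.sin (2 * π * a₂)^2 + (2)*Real.cos (2 * π * a₁)*Real.cos (2 * π * a₂) + (2)*Real.cos (2 * π * a₁)*Real.cos (2 * π * a₂)^2) := by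
  unfold X2
  rw [show 2 * π * (a₁ - a₂) = 2 * π * a₁ - (2 * π * a₂) from by ring]
  rw [show 2 * π * (a₁ - 2 * a₂) = 2 * π * a₁ - (2 * π * a₂ + (2 * π * a₂)) from by ring]
  simp only [Real.cos_add, Real.cos_sub, Real.sin_add, Real.sin_sub]
  ring

/-- For `G₂`, `S_ρ² = K(X₁, X₂)` pointwise. -/
theorem Srho_sq_eq_K_G2 (a₁ a₂ : ℝ) :
    (Srho a₁ a₂) ^ 2 = K (X1 a₁ a₂) (X2 a₁ a₂) := by
  rw [eSrho, eX1, eX2, K]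
  exact keyG2 (Real.cos (2 * π * a₁)) (Real.sin (2 * π * a₁))
    (Real.cos (2 * π * a₂)) (Real.sin (2 * π * a₂))
    (Real.sin_sq_add_cos_sq (2 * π * a₁)) (Real.sin_sq_add_cos_sq (2 * π * a₂))

end
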